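/- For the N-qubit Dicke state |D_k^N⟩ with N > 2 and 1 ≤ k ≤ N/2, the generalized geometric measure equals (N−2)/(2(N−1)) if k = N/2, and k/N if k < N/2. -/

import Mathlib

open scoped BigOperators

noncomputable section

namespace QI

/-- A pure state of a collection of qubits indexed by `ι`, given by its
amplitudes in the computational basis. -/
abbrev PureState (ι : Type) := (ι → Fin 2) → ℂ

variable {ι : Type} [Fintype ι] [DecidableEq ι]

/-- Squared norm of a pure state. -/
def nsq (ψ : PureState ι) : ℝ := ∑ x, Complex.normSq (ψ x)

/-- Normalization of a pure state. -/
def normalize (ψ : PureState ι) : PureState ι :=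
  fun x => ψ x / (Real.sqrt (nsq ψ) : ℂ)

/-- Combine configurations of the qubits in `A` and outside `A`. -/
def merge (A : Finset ι) (a : {i // i ∈ A} → Fin 2) (b : {i // i ∉ A} → Fin 2) :
    ι → Fin 2 := fun i => if h : i ∈ A then a ⟨i, h⟩ else b ⟨i, h⟩

/-- Reduced density matrix of the qubits in `A`. -/
def rdm (ψ : PureState ι) (A : Finset ι) :
    ({i // i ∈ A} → Fin 2) → ({i // i ∈ A} → Fin 2) → ℂ :=
  fun a a' => ∑ b : {i // i ∉ A} → Fin 2, ψ (merge A a b) * star (ψ (merge A a' b))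

/-- Maximal eigenvalue of a (Hermitian) matrix, via the Rayleigh quotient. -/
def maxEig {κ : Type} [Fintype κ] (ρ : κ → κ → ℂ) : ℝ :=
  ⨆ v : {v : κ → ℂ // ∑ i, Complex.normSq (v i) = 1},
    (∑ i, ∑ j, star (v.1 i) * ρ i j * v.1 j).re

/-- The generalized geometric measure: one minus the maximal squared Schmidt
coefficient over all nonempty proper bipartitions. -/
def GGM (ψ : PureState ι) : ℝ :=
  1 - ⨆ A : {A : Finset ι // A.Nonempty ∧ A ≠ Finset.univ}, maxEig (rdm ψ A.1)

/-- Unnormalized post-measurement state on the remaining qubits after obtaining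
the outcome corresponding to the basis vector `ξ` in a rank-1 projective
measurement on qubit `r`. -/
def collapse (ψ : PureState ι) (r : ι) (ξ : Fin 2 → ℂ) :
    PureState {i // i ≠ r} :=
  fun b => ∑ v : Fin 2, ξ v * ψ (fun i => if h : i = r then v else b ⟨i, h⟩)

/-- First measurement-basis vector `cos(θ/2)|0⟩ + e^{iφ} sin(θ/2)|1⟩`. -/
def xiUp (θ φ : ℝ) : Fin 2 → ℂ :=
  ![(Real.cos (θ/2) : ℂ), Complex.exp (φ * Complex.I) * (Real.sin (θ/2) : ℂ)]

/-- Second measurement-basis vector `-e^{-iφ} sin(θ/2)|0⟩ + cos(θ/2)|1⟩`. -/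
def xiDn (θ φ : ℝ) : Fin 2 → ℂ :=
  ![-(Complex.exp (-(φ * Complex.I))) * (Real.sin (θ/2) : ℂ), (Real.cos (θ/2) : ℂ)]

/-- Average post-measurement GGM for the projective measurement `(θ, φ)` on
qubit `r`. -/
def avgGGM (ψ : PureState ι) (r : ι) (θ φ : ℝ) : ℝ :=
  nsq (collapse ψ r (xiUp θ φ)) * GGM (normalize (collapse ψ r (xiUp θ φ))) +
  nsq (collapse ψ r (xiDn θ φ)) * GGM (normalize (collapse ψ r (xiDn θ φ)))

/-- The localizable generalized geometric measure for single-qubit projective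
measurement on qubit `r`. -/
def LGGM (ψ : PureState ι) (r : ι) : ℝ :=
  sSup {E | ∃ θ ∈ Set.Icc 0 Real.pi, ∃ φ ∈ Set.Ico 0 (2 * Real.pi),
    E = avgGGM ψ r θ φ}

/-- The generalized GHZ state `a₁|0…0⟩ + a₂|1…1⟩`. -/
def ghz (a1 a2 : ℂ) : PureState ι :=
  fun x => if x = fun _ => 0 then a1 else if x = fun _ => 1 then a2 else 0

/-- Computational basis vector with a single `1` at position `i`. -/
def basisVec (i : ι) : ι → Fin 2 := fun j => if j = i then 1 else 0

/-- The generalized W state `Σᵢ aᵢ |0…1ᵢ…0⟩`. -/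
def wState (a : ι → ℂ) : PureState ι :=
  fun x => ∑ i, if x = basisVec i then a i else 0

/-- The Dicke state with `k` excitations: equal superposition of all
computational basis states with exactly `k` ones. -/
def dicke (k : ℕ) : PureState ι :=
  fun x => if (∑ i, ((x i : ℕ))) = k
    then ((1 / Real.sqrt ((Fintype.card ι).choose k) : ℝ) : ℂ) else 0



lemma vander (n m k : ℕ) :
    ∑ i ∈ Finset.range (k+1), n.choose i * m.choose (k - i) = (n + m).choose k := by
  rw [Nat.add_choose_eq, Finset.Nat.sum_antidiagonal_eq_sum_range_succ_mk]

lemma choose_le_succ2 {m j : ℕ} (h : 2 * j < m) : m.choose j ≤ m.choose (j+1) := by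
  rcases Nat.lt_or_ge j (m / 2) with h' | h'
  · exact Nat.choose_le_succ_of_lt_half_left h'
  · have hm : m = 2 * j + 1 := by omega
    subst hm
    have : (2*j+1).choose j = (2*j+1).choose (j+1) := by
      rw [← Nat.choose_symm (show j ≤ 2*j+1 by omega)]
      congr 1
      omega
    omega

lemma coreAux {n m k i : ℕ} (hi1 : 1 ≤ i) (hik : i ≤ k) (hm : 2 * (k - i) < m)
    (hn : 1 ≤ n) :
    n.choose i * m.choose (k - i) ≤ (n + m - 1).choose k := by
  obtain ⟨n', rfl⟩ : ∃ n', n = n' + 1 := ⟨n - 1, by omega⟩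
  obtain ⟨i', rfl⟩ : ∃ i', i = i' + 1 := ⟨i - 1, by omega⟩
  rw [Nat.choose_succ_succ, add_mul]
  simp only [Nat.succ_eq_add_one]
  have h2 : n'.choose i' * m.choose (k - (i'+1)) ≤ n'.choose i' * m.choose (k - i') := by
    apply Nat.mul_le_mul_left
    have h3 := choose_le_succ2 (m := m) (j := k - (i'+1)) hm
    have he : k - (i'+1) + 1 = k - i' := by omega
    rwa [he] at h3
  have hsum : n'.choose i' * m.choose (k - i') + n'.choose (i'+1) * m.choose (k - (i'+1))
      ≤ ∑ j ∈ Finset.range (k+1), n'.choose j * m.choose (k - j) := by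
    have hsub : ({i', i'+1} : Finset ℕ) ⊆ Finset.range (k+1) := by
      intro x hx
      simp only [Finset.mem_insert, Finset.mem_singleton] at hx
      rcases hx with rfl | rfl <;> simp only [Finset.mem_range] <;> omega
    calc n'.choose i' * m.choose (k - i') + n'.choose (i'+1) * m.choose (k - (i'+1))
        = ∑ j ∈ ({i', i'+1} : Finset ℕ), n'.choose j * m.choose (k - j) := by
          rw [Finset.sum_pair (by omega)]
      _ ≤ _ := Finset.sum_le_sum_of_subset hsub
  rw [vander] at hsum
  have he2 : (n' + 1 + m - 1).choose k = (n' + m).choose k := by congr 1; omega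
  rw [he2]
  omega

/-- Generic bound: for `2k < n+m`, `C(n,i) C(m,k-i) ≤ C(n+m-1, k)`. -/
lemma gen_core {n m k i : ℕ} (hn : 1 ≤ n) (hm : 1 ≤ m) (hk : 2 * k < n + m)
    (hik : i ≤ k) :
    n.choose i * m.choose (k - i) ≤ (n + m - 1).choose k := by
  rcases Nat.eq_zero_or_pos i with rfl | hi1
  · simp only [Nat.choose_zero_right, one_mul, Nat.sub_zero]
    exact Nat.choose_le_choose k (by omega)
  rcases Nat.eq_or_lt_of_le hik with rfl | hik'
  · simp only [Nat.sub_self, Nat.choose_zero_right, mul_one]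
    exact Nat.choose_le_choose i (by omega)
  by_cases hcase : n ≤ 2 * i
  · exact coreAux hi1 hik (by omega) hn
  · have he : k - (k - i) = i := by omega
    calc n.choose i * m.choose (k - i) = m.choose (k - i) * n.choose i := mul_comm _ _
      _ = m.choose (k - i) * n.choose (k - (k-i)) := by rw [he]
      _ ≤ (m + n - 1).choose k := coreAux (by omega) (by omega) (by omega) hm
      _ = (n + m - 1).choose k := by rw [add_comm]

/-- Special half-filling bound: `n+m = 2k` gives `C(n,i) C(m,k-i) ≤ 2 C(2k-2, k-1)`. -/
lemma spec_core {n m k i : ℕ} (hn : 1 ≤ n) (hm : 1 ≤ m) (hk : n + m = 2 * k)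
    (hik : i ≤ k) :
    n.choose i * m.choose (k - i) ≤ 2 * (2 * k - 2).choose (k - 1) := by
  obtain ⟨a, rfl⟩ : ∃ a, k = a + 1 := ⟨k - 1, by omega⟩
  have e1 : 2 * (a+1) - 2 = 2*a := by omega
  have e2 : a + 1 - 1 = a := by omega
  rw [e1, e2]
  have hmid : (2*a+1).choose (a+1) ≤ 2 * (2*a).choose a := by
    have hp : (2*a+1).choose (a+1) = (2*a).choose a + (2*a).choose (a+1) :=
      Nat.choose_succ_succ _ _
    have hle : (2*a).choose (a+1) ≤ (2*a).choose a := by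
      have h4 := Nat.choose_le_middle (a+1) (2*a)
      have he : (2*a)/2 = a := by omega
      rwa [he] at h4
    omega
  rcases Nat.eq_or_lt_of_le hik with hik0 | hik'
  · -- i = k = a+1
    rw [← hik0]
    simp only [Nat.sub_self, Nat.choose_zero_right, mul_one]
    calc n.choose i ≤ (2*a+1).choose i := Nat.choose_le_choose i (by omega)
      _ = (2*a+1).choose (a+1) := by rw [hik0]
      _ ≤ _ := hmid
  rcases Nat.eq_or_lt_of_le hm with hm1 | hm2
  · -- m = 1
    have hm' : m = 1 := hm1.symm
    subst hm'
    rcases Nat.lt_or_ge 1 (a + 1 - i) with h2 | h2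
    · have h0 : Nat.choose 1 (a+1-i) = 0 := Nat.choose_eq_zero_of_lt (by omega)
      simp [h0]
    · have hi : i = a := by omega
      subst hi
      have hki : i + 1 - i = 1 := by omega
      rw [hki, Nat.choose_one_right, mul_one]
      have hn' : n = 2*i+1 := by omega
      subst hn'
      have hsymm : (2*i+1).choose i = (2*i+1).choose (i+1) := by
        rw [← Nat.choose_symm (show i ≤ 2*i+1 by omega)]
        congr 1
        omega
      rw [hsymm]
      exact hmid
  · -- main case: 2 ≤ m, i ≤ a
    have hia : i ≤ a := by omega
    obtain ⟨m', rfl⟩ : ∃ m', m = m' + 1 := ⟨m - 1, by omega⟩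
    have hj : a + 1 - i = (a - i) + 1 := by omega
    rw [hj, Nat.choose_succ_succ, Nat.mul_add]
    simp only [Nat.succ_eq_add_one]
    have hnm' : n + m' = 2*a + 1 := by omega
    have hA : n.choose i * m'.choose (a - i) ≤ (2*a).choose a := by
      have h := gen_core (n := n) (m := m') (k := a) (i := i)
        hn (by omega) (by omega) hia
      have he : n + m' - 1 = 2*a := by omega
      rwa [he] at h
    have hB : n.choose i * m'.choose (a - i + 1) ≤ (2*a).choose a := by
      rcases Nat.lt_or_ge m' (a - i + 1) with hlt | hge
      · have h0 : m'.choose (a-i+1) = 0 := Nat.choose_eq_zero_of_lt hlt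
        simp [h0]
      rcases Nat.lt_or_ge n i with hlt | hge2
      · have h0 : n.choose i = 0 := Nat.choose_eq_zero_of_lt hlt
        simp [h0]
      have hni : n - i ≤ a := by omega
      have hs1 : n.choose i = n.choose (n - i) := (Nat.choose_symm hge2).symm
      have hs2 : m'.choose (a - i + 1) = m'.choose (a - (n - i)) := by
        rw [← Nat.choose_symm hge]
        congr 1
        omega
      rw [hs1, hs2]
      have h := gen_core (n := n) (m := m') (k := a) (i := n - i)
        hn (by omega) (by omega) hni
      have he : n + m' - 1 = 2*a := by omega
      rwa [he] at h
    omega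



/-- weight of a configuration -/
def wt {κ : Type} [Fintype κ] (x : κ → Fin 2) : ℕ := ∑ i, (x i : ℕ)

lemma fin2_val (v : Fin 2) : (v : ℕ) = if v = 1 then 1 else 0 := by
  fin_cases v <;> simp

lemma wt_le {κ : Type} [Fintype κ] (x : κ → Fin 2) : wt x ≤ Fintype.card κ := by
  unfold wt
  calc ∑ i, (x i : ℕ) ≤ ∑ _i : κ, 1 := Finset.sum_le_sum (fun i _ => by omega)
    _ = Fintype.card κ := by simp

/-- number of configurations of given weight -/
lemma card_wt {κ : Type} [Fintype κ] [DecidableEq κ] (m : ℕ) :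
    (Finset.univ.filter (fun x : κ → Fin 2 => wt x = m)).card
      = (Fintype.card κ).choose m := by
  rw [← Finset.card_univ, ← Finset.card_powersetCard m (Finset.univ : Finset κ)]
  apply Finset.card_nbij' (fun x => Finset.univ.filter (fun j => x j = 1))
    (fun s => fun j => if j ∈ s then 1 else 0)
  · intro x hx
    simp only [Finset.mem_coe, Finset.mem_filter, Finset.mem_univ, true_and] at hx
    change wt x = m at hx
    simp only [Finset.mem_coe, Finset.mem_powersetCard]
    refine ⟨Finset.filter_subset _ _, ?_⟩
    rw [← hx]
    unfold wt
    rw [Finset.card_filter]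
    exact (Finset.sum_congr rfl (fun i _ => (fin2_val (x i)))).symm
  · intro s hs
    simp only [Finset.mem_coe, Finset.mem_powersetCard, Finset.mem_filter, Finset.mem_univ, true_and] at hs ⊢
    show wt (fun j => if j ∈ s then (1:Fin 2) else 0) = m
    unfold wt
    rw [Finset.sum_congr rfl (fun i (_ : i ∈ Finset.univ) => (fin2_val (if i ∈ s then (1 : Fin 2) else 0)))]
    have : ∀ i : κ, ((if i ∈ s then (1:Fin 2) else 0) = 1) ↔ i ∈ s := by
      intro i; by_cases h : i ∈ s <;> simp [h]
    rw [Finset.sum_congr rfl (fun i _ => by rw [if_congr (this i) rfl rfl])]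
    rw [Finset.sum_boole]
    simp [Finset.filter_mem_eq_inter, hs.2]
  · intro x hx
    funext j
    by_cases h : x j = 1 <;> simp [h]
    omega
  · intro s hs
    ext j
    simp

lemma wt_merge (A : Finset ι) (a : {i // i ∈ A} → Fin 2) (b : {i // i ∉ A} → Fin 2) :
    wt (merge A a b) = wt a + wt b := by
  unfold wt merge
  rw [← Finset.sum_add_sum_compl A]
  congr 1
  · rw [Finset.sum_subtype A (fun x => Iff.rfl) (fun i => ((if h : i ∈ A then a ⟨i, h⟩ else b ⟨i, h⟩ : Fin 2) : ℕ))]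
    apply Finset.sum_congr rfl
    intro x _
    rw [dif_pos x.2]
  · rw [Finset.sum_subtype Aᶜ (fun x => Finset.mem_compl) (fun i => ((if h : i ∈ A then a ⟨i, h⟩ else b ⟨i, h⟩ : Fin 2) : ℕ))]
    apply Finset.sum_congr rfl
    intro x _
    rw [dif_neg x.2]

/-- the coefficient: number of environment configurations completing weight `i` to `k` -/
lemma card_compl_wt (A : Finset ι) (k i : ℕ) :
    (Finset.univ.filter (fun b : {j // j ∉ A} → Fin 2 => i + wt b = k)).card
      = if i ≤ k then (Fintype.card ι - A.card).choose (k - i) else 0 := by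
  have hcard : Fintype.card {j // j ∉ A} = Fintype.card ι - A.card := by
    rw [Fintype.card_subtype_compl, Fintype.card_coe]
  by_cases h : i ≤ k
  · rw [if_pos h, ← hcard, ← card_wt]
    congr 1
    ext b
    simp only [Finset.mem_filter, Finset.mem_univ, true_and]
    omega
  · rw [if_neg h]
    rw [Finset.card_eq_zero, Finset.filter_eq_empty_iff]
    intro b _
    omega

lemma dicke_apply (k : ℕ) (x : ι → Fin 2) :
    dicke k x = if wt x = k
      then ((1 / Real.sqrt ((Fintype.card ι).choose k) : ℝ) : ℂ) else 0 := rfl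

/-- reduced density matrix of the Dicke state -/
lemma rdm_dicke (k : ℕ) (hk : ((Fintype.card ι).choose k : ℝ) ≠ 0) (A : Finset ι)
    (a a' : {i // i ∈ A} → Fin 2) :
    rdm (dicke k) A a a' =
      (((if wt a = wt a' ∧ wt a ≤ k
          then ((Fintype.card ι - A.card).choose (k - wt a) : ℝ) else 0)
        / ((Fintype.card ι).choose k) : ℝ) : ℂ) := by
  set C : ℝ := ((Fintype.card ι).choose k : ℝ) with hC
  have hCpos : 0 < C := lt_of_le_of_ne (Nat.cast_nonneg _) (Ne.symm hk)
  set r : ℝ := 1 / Real.sqrt C with hr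
  have hrr : r * r = 1 / C := by
    rw [hr, div_mul_div_comm, one_mul, Real.mul_self_sqrt hCpos.le]
  unfold rdm
  have hterm : ∀ b : {j // j ∉ A} → Fin 2,
      dicke k (merge A a b) * star (dicke k (merge A a' b))
      = if (wt a + wt b = k ∧ wt a' + wt b = k) then ((r*r : ℝ) : ℂ) else 0 := by
    intro b
    rw [dicke_apply, dicke_apply, wt_merge, wt_merge]
    by_cases h1 : wt a + wt b = k <;> by_cases h2 : wt a' + wt b = k <;>
      simp [h1, h2, ← hC, ← hr, Complex.ofReal_mul, RCLike.star_def, Complex.conj_ofReal]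
  rw [Finset.sum_congr rfl (fun b _ => hterm b)]
  by_cases heq : wt a = wt a'
  · have hcond : ∀ b : {j // j ∉ A} → Fin 2,
        ((wt a + wt b = k ∧ wt a' + wt b = k)) ↔ (wt a + wt b = k) := by
      intro b; constructor
      · exact fun h => h.1
      · exact fun h => ⟨h, by omega⟩
    rw [Finset.sum_congr rfl (fun b _ => by rw [if_congr (hcond b) rfl rfl])]
    rw [← Finset.sum_filter, Finset.sum_const, card_compl_wt A k (wt a)]
    by_cases hle : wt a ≤ k
    · simp only [if_pos hle, if_pos (And.intro heq hle), nsmul_eq_mul, hrr]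
      push_cast
      field_simp
    · simp only [if_neg hle, if_neg (fun h : _ ∧ _ => hle h.2), zero_smul]
      norm_num
  · have : ∀ b : {j // j ∉ A} → Fin 2,
        ¬(wt a + wt b = k ∧ wt a' + wt b = k) := by
      intro b h
      exact heq (by omega)
    rw [Finset.sum_congr rfl (fun b _ => if_neg (this b))]
    simp only [Finset.sum_const, smul_zero]
    rw [if_neg (fun h : _ ∧ _ => heq h.1)]
    norm_num

/-- abbreviation for the diagonal coefficients -/
def coefD (Nc nA k i : ℕ) : ℝ :=
  (if i ≤ k then ((Nc - nA).choose (k - i) : ℝ) else 0) / (Nc.choose k)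

lemma rayleigh_dicke (k : ℕ) (hk : ((Fintype.card ι).choose k : ℝ) ≠ 0) (A : Finset ι)
    (v : ({i // i ∈ A} → Fin 2) → ℂ) :
    (∑ x, ∑ y, star (v x) * rdm (dicke k) A x y * v y).re
    = ∑ i ∈ Finset.range (A.card + 1),
        coefD (Fintype.card ι) A.card k i *
          Complex.normSq (∑ x ∈ Finset.univ.filter (fun x : {i // i ∈ A} → Fin 2 => wt x = i), v x) := by
  set S : ℕ → ℂ := fun i => ∑ x ∈ Finset.univ.filter (fun x : {i // i ∈ A} → Fin 2 => wt x = i), v x with hS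
  have h1 : ∀ x : {i // i ∈ A} → Fin 2,
      ∑ y, star (v x) * rdm (dicke k) A x y * v y
      = star (v x) * ((coefD (Fintype.card ι) A.card k (wt x) : ℂ) * S (wt x)) := by
    intro x
    have h2 : ∀ y : {i // i ∈ A} → Fin 2,
        star (v x) * rdm (dicke k) A x y * v y
        = star (v x) * (if wt y = wt x then ((coefD (Fintype.card ι) A.card k (wt x) : ℂ)) * v y else 0) := by
      intro y
      rw [rdm_dicke k hk A x y]
      unfold coefD
      by_cases h : wt x = wt y
      · rw [if_pos (h ▸ rfl : wt y = wt x)]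
        rw [h]
        by_cases h2 : wt y ≤ k
        · rw [if_pos ⟨rfl, h2⟩, if_pos h2]
          push_cast
          ring
        · rw [if_neg (fun hc : _ ∧ _ => h2 hc.2), if_neg h2]
          push_cast
          ring
      · rw [if_neg (fun hc : _ ∧ _ => h hc.1), if_neg (fun hc => h (hc.symm))]
        simp
    rw [Finset.sum_congr rfl (fun y _ => h2 y), ← Finset.mul_sum]
    congr 1
    rw [← Finset.sum_filter, Finset.mul_sum]
  rw [Finset.sum_congr rfl (fun x _ => h1 x)]
  have hmaps : ∀ x : {i // i ∈ A} → Fin 2, x ∈ Finset.univ → wt x ∈ Finset.range (A.card + 1) := by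
    intro x _
    rw [Finset.mem_range]
    have := wt_le x
    rw [Fintype.card_coe] at this
    omega
  rw [← Finset.sum_fiberwise_of_maps_to hmaps]
  rw [Complex.re_sum]
  apply Finset.sum_congr rfl
  intro i _
  have hstar : ∑ x ∈ Finset.univ.filter (fun x : {i // i ∈ A} → Fin 2 => wt x = i),
      star (v x) = star (S i) := by
    rw [hS, star_sum]
  have h3 : ∑ x ∈ Finset.univ.filter (fun x : {i // i ∈ A} → Fin 2 => wt x = i),
      star (v x) * ((coefD (Fintype.card ι) A.card k (wt x) : ℂ) * S (wt x))
      = star (S i) * ((coefD (Fintype.card ι) A.card k i : ℂ) * S i) := by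
    rw [← hstar, Finset.sum_mul]
    apply Finset.sum_congr rfl
    intro x hx
    rw [(Finset.mem_filter.mp hx).2]
  rw [h3]
  have h4 : star (S i) = (starRingEnd ℂ) (S i) := rfl
  rw [h4]
  have : (starRingEnd ℂ) (S i) * ((coefD (Fintype.card ι) A.card k i : ℂ) * S i)
      = (coefD (Fintype.card ι) A.card k i : ℂ) * ((S i) * (starRingEnd ℂ) (S i)) := by ring
  rw [this, Complex.mul_conj]
  rw [← Complex.ofReal_mul]
  exact Complex.ofReal_re _

lemma normSq_sum_le {β : Type} (s : Finset β) (v : β → ℂ) :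
    Complex.normSq (∑ x ∈ s, v x) ≤ s.card * ∑ x ∈ s, Complex.normSq (v x) := by
  have h1 : ‖∑ x ∈ s, v x‖ ≤ ∑ x ∈ s, ‖v x‖ :=
    norm_sum_le _ _
  have h2 : (∑ x ∈ s, ‖v x‖)^2 ≤ s.card * ∑ x ∈ s, ‖v x‖ ^ 2 := by
    have := Finset.sum_mul_sq_le_sq_mul_sq s (fun _ => (1:ℝ)) (fun x => ‖v x‖)
    simpa using this
  have h3 : Complex.normSq (∑ x ∈ s, v x) = ‖∑ x ∈ s, v x‖ ^ 2 :=
    (Complex.sq_norm _).symm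
  rw [h3]
  calc ‖∑ x ∈ s, v x‖ ^ 2 ≤ (∑ x ∈ s, ‖v x‖)^2 := by
        apply pow_le_pow_left₀ (norm_nonneg _) h1
    _ ≤ s.card * ∑ x ∈ s, ‖v x‖ ^ 2 := h2
    _ = s.card * ∑ x ∈ s, Complex.normSq (v x) := by
        congr 1
        exact Finset.sum_congr rfl (fun x _ => Complex.sq_norm _)

lemma maxEig_dicke (k : ℕ) (hkc : k ≤ Fintype.card ι) (A : Finset ι) :
    maxEig (rdm (dicke k) A) =
      (((Finset.range (k+1)).sup
          (fun i => A.card.choose i * (Fintype.card ι - A.card).choose (k - i)) : ℕ) : ℝ)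
        / ((Fintype.card ι).choose k) := by
  classical
  set Nc := Fintype.card ι with hNc
  set n := A.card with hn
  set F : ℕ := (Finset.range (k+1)).sup
      (fun i => n.choose i * (Nc - n).choose (k - i)) with hF
  have hCpos : (0:ℝ) < (Nc.choose k : ℝ) := by
    exact_mod_cast Nat.choose_pos hkc
  have hCne : ((Nc.choose k : ℝ)) ≠ 0 := ne_of_gt hCpos
  have hcard : Fintype.card {i // i ∈ A} = n := Fintype.card_coe A
  -- the key termwise bound
  have hkey : ∀ i : ℕ, (n.choose i : ℝ) * (if i ≤ k then ((Nc - n).choose (k - i) : ℝ) else 0) ≤ (F:ℝ) := by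
    intro i
    by_cases h : i ≤ k
    · rw [if_pos h]
      have : n.choose i * (Nc - n).choose (k - i) ≤ F :=
        Finset.le_sup (f := fun i => n.choose i * (Nc - n).choose (k - i))
          (Finset.mem_range.mpr (by omega))
      exact_mod_cast this
    · rw [if_neg h, mul_zero]
      positivity
  -- upper bound for every unit vector
  have upper : ∀ v : ({i // i ∈ A} → Fin 2) → ℂ, (∑ x, Complex.normSq (v x) = 1) →
      (∑ x, ∑ y, star (v x) * rdm (dicke k) A x y * v y).re ≤ (F:ℝ) / (Nc.choose k) := by
    intro v hv
    rw [rayleigh_dicke k hCne A v]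
    have hterm : ∀ i ∈ Finset.range (n+1),
        coefD Nc n k i * Complex.normSq (∑ x ∈ Finset.univ.filter (fun x : {i // i ∈ A} → Fin 2 => wt x = i), v x)
        ≤ ((F:ℝ) / (Nc.choose k)) * ∑ x ∈ Finset.univ.filter (fun x : {i // i ∈ A} → Fin 2 => wt x = i), Complex.normSq (v x) := by
      intro i _
      set cls := Finset.univ.filter (fun x : {i // i ∈ A} → Fin 2 => wt x = i) with hcls
      have hclscard : (cls.card : ℝ) = (n.choose i : ℝ) := by
        rw [hcls, card_wt, hcard]
      have hns : Complex.normSq (∑ x ∈ cls, v x) ≤ (n.choose i : ℝ) * ∑ x ∈ cls, Complex.normSq (v x) := by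
        have := normSq_sum_le cls v
        rwa [hclscard] at this
      have hsum_nonneg : (0:ℝ) ≤ ∑ x ∈ cls, Complex.normSq (v x) :=
        Finset.sum_nonneg (fun x _ => Complex.normSq_nonneg _)
      have hcoef_nonneg : (0:ℝ) ≤ (if i ≤ k then ((Nc - n).choose (k - i) : ℝ) else 0) := by
        by_cases h : i ≤ k <;> simp [h]
      calc coefD Nc n k i * Complex.normSq (∑ x ∈ cls, v x)
          ≤ coefD Nc n k i * ((n.choose i : ℝ) * ∑ x ∈ cls, Complex.normSq (v x)) := by
            apply mul_le_mul_of_nonneg_left hns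
            unfold coefD
            positivity
        _ = ((n.choose i : ℝ) * (if i ≤ k then ((Nc - n).choose (k - i) : ℝ) else 0)) / (Nc.choose k)
              * ∑ x ∈ cls, Complex.normSq (v x) := by
            unfold coefD
            ring
        _ ≤ ((F:ℝ) / (Nc.choose k)) * ∑ x ∈ cls, Complex.normSq (v x) := by
            apply mul_le_mul_of_nonneg_right _ hsum_nonneg
            exact (div_le_div_iff_of_pos_right hCpos).mpr (hkey i)
    have hmaps : ∀ x : {i // i ∈ A} → Fin 2, x ∈ Finset.univ → wt x ∈ Finset.range (n + 1) := by
      intro x _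
      rw [Finset.mem_range]
      have := wt_le x
      rw [hcard] at this
      omega
    calc ∑ i ∈ Finset.range (n+1), coefD Nc n k i *
            Complex.normSq (∑ x ∈ Finset.univ.filter (fun x : {i // i ∈ A} → Fin 2 => wt x = i), v x)
        ≤ ∑ i ∈ Finset.range (n+1), ((F:ℝ) / (Nc.choose k)) *
            ∑ x ∈ Finset.univ.filter (fun x : {i // i ∈ A} → Fin 2 => wt x = i), Complex.normSq (v x) :=
          Finset.sum_le_sum hterm
      _ = ((F:ℝ) / (Nc.choose k)) * ∑ i ∈ Finset.range (n+1),
            ∑ x ∈ Finset.univ.filter (fun x : {i // i ∈ A} → Fin 2 => wt x = i), Complex.normSq (v x) := by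
          rw [Finset.mul_sum]
      _ = ((F:ℝ) / (Nc.choose k)) * ∑ x, Complex.normSq (v x) := by
          rw [Finset.sum_fiberwise_of_maps_to hmaps]
      _ = ((F:ℝ) / (Nc.choose k)) := by rw [hv, mul_one]
  -- positivity of F
  have hnle : n ≤ Nc := by
    rw [hn, hNc]
    exact Finset.card_le_univ A
  have hvdm : ∑ i ∈ Finset.range (k+1), n.choose i * (Nc - n).choose (k - i) = Nc.choose k := by
    rw [vander]
    congr 1
    omega
  have hFpos : 0 < F := by
    rcases Nat.eq_zero_or_pos F with hF0 | h
    · exfalso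
      have hz : ∀ i ∈ Finset.range (k+1), n.choose i * (Nc - n).choose (k - i) = 0 := by
        intro i hi
        have h5 := Finset.le_sup (f := fun i => n.choose i * (Nc - n).choose (k - i)) hi
        rw [← hF, hF0] at h5
        simpa using h5
      have hs := Finset.sum_eq_zero hz
      rw [hvdm] at hs
      have := Nat.choose_pos hkc
      omega
    · exact h
  obtain ⟨i0, hi0mem, hi0⟩ := Finset.exists_mem_eq_sup (Finset.range (k+1))
    ⟨0, Finset.mem_range.mpr (by omega)⟩ (fun i => n.choose i * (Nc - n).choose (k - i))
  have hi0k : i0 ≤ k := by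
    have := Finset.mem_range.mp hi0mem
    omega
  have hcpos : 0 < n.choose i0 := by
    rcases Nat.eq_zero_or_pos (n.choose i0) with h | h
    · rw [h, zero_mul] at hi0
      omega
    · exact h
  have hi0n : i0 ≤ n := by
    by_contra h
    push_neg at h
    rw [Nat.choose_eq_zero_of_lt h] at hcpos
    omega
  set c : ℕ := n.choose i0 with hc
  have hcposR : (0:ℝ) < (c:ℝ) := by exact_mod_cast hcpos
  set w : ({i // i ∈ A} → Fin 2) → ℂ :=
    fun x => if wt x = i0 then ((1/Real.sqrt c : ℝ) : ℂ) else 0 with hw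
  have hwnorm : ∑ x, Complex.normSq (w x) = 1 := by
    have h1 : ∀ x : {i // i ∈ A} → Fin 2, Complex.normSq (w x)
        = if wt x = i0 then (1/Real.sqrt c)*(1/Real.sqrt c) else 0 := by
      intro x
      rw [hw]
      by_cases h : wt x = i0
      · simp only [if_pos h, Complex.normSq_ofReal]
      · simp only [if_neg h, Complex.normSq_zero]
    rw [Finset.sum_congr rfl (fun x _ => h1 x), ← Finset.sum_filter, Finset.sum_const,
      card_wt, hcard, ← hc, nsmul_eq_mul]
    rw [div_mul_div_comm, one_mul, Real.mul_self_sqrt hcposR.le]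
    field_simp
  have hwval : (∑ x, ∑ y, star (w x) * rdm (dicke k) A x y * w y).re
      = (F:ℝ)/(Nc.choose k) := by
    rw [rayleigh_dicke k hCne A w]
    rw [Finset.sum_eq_single i0]
    · have hclssum : (∑ x ∈ Finset.univ.filter (fun x : {i // i ∈ A} → Fin 2 => wt x = i0), w x)
          = (((c:ℝ) * (1/Real.sqrt c) : ℝ) : ℂ) := by
        have : ∀ x ∈ Finset.univ.filter (fun x : {i // i ∈ A} → Fin 2 => wt x = i0),
            w x = ((1/Real.sqrt c : ℝ) : ℂ) := by
          intro x hx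
          rw [hw]
          exact if_pos (Finset.mem_filter.mp hx).2
        rw [Finset.sum_congr rfl this, Finset.sum_const, card_wt, hcard, ← hc, nsmul_eq_mul]
        push_cast
        ring
      rw [hclssum, Complex.normSq_ofReal]
      have hsq : ((c:ℝ) * (1/Real.sqrt c)) * ((c:ℝ) * (1/Real.sqrt c)) = (c:ℝ) := by
        have hs : Real.sqrt c ≠ 0 := by
          positivity
        field_simp
        rw [Real.sq_sqrt hcposR.le]
      rw [hsq]
      unfold coefD
      have hi0' : F = c * (Nc - n).choose (k - i0) := by rw [hF]; exact hi0
      rw [if_pos hi0k, hi0']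
      push_cast
      ring
    · intro i _ hne
      have hz : (∑ x ∈ Finset.univ.filter (fun x : {i // i ∈ A} → Fin 2 => wt x = i), w x) = 0 := by
        apply Finset.sum_eq_zero
        intro x hx
        rw [hw]
        exact if_neg (by rw [(Finset.mem_filter.mp hx).2]; exact hne)
      rw [hz]
      simp
    · intro h
      exact absurd (Finset.mem_range.mpr (by omega)) h
  have hbdd : BddAbove (Set.range
      (fun v : {v : ({i // i ∈ A} → Fin 2) → ℂ // ∑ x, Complex.normSq (v x) = 1} =>
        (∑ x, ∑ y, star (v.1 x) * rdm (dicke k) A x y * v.1 y).re)) := by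
    refine ⟨(F:ℝ)/(Nc.choose k), ?_⟩
    rintro r ⟨v, rfl⟩
    exact upper v.1 v.2
  have hnonempty : Nonempty {v : ({i // i ∈ A} → Fin 2) → ℂ // ∑ x, Complex.normSq (v x) = 1} :=
    ⟨⟨w, hwnorm⟩⟩
  unfold maxEig
  apply le_antisymm
  · exact ciSup_le (fun v => upper v.1 v.2)
  · have hle := le_ciSup hbdd (⟨w, hwnorm⟩ :
      {v : ({i // i ∈ A} → Fin 2) → ℂ // ∑ x, Complex.normSq (v x) = 1})
    rw [← hwval]
    exact hle


/-- For the `N`-qubit Dicke state `|D_k^N⟩` with `N > 2` and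
`1 ≤ k ≤ N/2`, the GGM equals `(N-2)/(2(N-1))` if `k = N/2` and `k/N`
if `k < N/2`. -/
theorem stmt12 (N k : ℕ) (hN : 2 < N) (hk1 : 1 ≤ k) (hk2 : 2 * k ≤ N) :
    GGM (dicke k : PureState (Fin N)) =
      if 2 * k = N then ((N : ℝ) - 2) / (2 * ((N : ℝ) - 1))
      else (k : ℝ) / N := by

  classical
  have hkN : k ≤ N := by omega
  have hcf : Fintype.card (Fin N) = N := Fintype.card_fin N
  have hCpos : (0:ℝ) < (N.choose k : ℝ) := by exact_mod_cast Nat.choose_pos hkN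
  set M : ℕ := if 2 * k = N then 2 * (N-2).choose (k-1) else (N-1).choose k with hM
  -- the value of maxEig for each cut
  set FA : Finset (Fin N) → ℕ :=
    fun A => (Finset.range (k+1)).sup
      (fun i => A.card.choose i * (N - A.card).choose (k - i)) with hFA
  have hval : ∀ A : Finset (Fin N), maxEig (rdm (dicke k) A) = (FA A : ℝ) / (N.choose k) := by
    intro A
    have := maxEig_dicke (ι := Fin N) k (by omega) A
    rw [hcf] at this
    exact this
  -- upper bound
  have hub : ∀ A : Finset (Fin N), A.Nonempty → A ≠ Finset.univ → FA A ≤ M := by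
    intro A hA hA'
    have hn1 : 1 ≤ A.card := Finset.card_pos.mpr hA
    have hnN : A.card < N := by
      have h := Finset.card_lt_card (Finset.ssubset_univ_iff.mpr hA')
      rwa [Finset.card_univ, hcf] at h
    rw [hFA]
    apply Finset.sup_le
    intro i hi
    have hik : i ≤ k := by
      have := Finset.mem_range.mp hi
      omega
    rw [hM]
    by_cases hsp : 2 * k = N
    · rw [if_pos hsp]
      have h := spec_core (n := A.card) (m := N - A.card) (k := k) (i := i)
        hn1 (by omega) (by omega) hik
      have he : 2 * k - 2 = N - 2 := by omega
      have he2 : k - 1 = k - 1 := rfl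
      rw [he] at h
      exact h
    · rw [if_neg hsp]
      have h := gen_core (n := A.card) (m := N - A.card) (k := k) (i := i)
        hn1 (by omega) (by omega) hik
      have he : A.card + (N - A.card) - 1 = N - 1 := by omega
      rwa [he] at h
  -- the witness cut
  have ha01 : ((⟨0, by omega⟩ : Fin N) : Fin N) ≠ (⟨1, by omega⟩ : Fin N) := by
    intro h
    have := Fin.mk.injEq (n := N) 0 (by omega) 1 (by omega)
    simp [Fin.ext_iff] at h
  obtain ⟨A0, hA0ne, hA0univ, hA0val⟩ :
      ∃ A0 : Finset (Fin N), A0.Nonempty ∧ A0 ≠ Finset.univ ∧ FA A0 = M := by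
    by_cases hsp : 2 * k = N
    · refine ⟨{⟨0, by omega⟩, ⟨1, by omega⟩}, ⟨_, Finset.mem_insert_self _ _⟩, ?_, ?_⟩
      · intro h
        have hc := congrArg Finset.card h
        rw [Finset.card_pair ha01, Finset.card_univ, hcf] at hc
        omega
      · have hcard2 : ({⟨0, by omega⟩, ⟨1, by omega⟩} : Finset (Fin N)).card = 2 :=
          Finset.card_pair ha01
        apply le_antisymm
        · exact hub _ ⟨_, Finset.mem_insert_self _ _⟩ (by
            intro h
            have hc := congrArg Finset.card h
            rw [Finset.card_pair ha01, Finset.card_univ, hcf] at hc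
            omega)
        · rw [hFA, hM, if_pos hsp]
          have h1 : (1:ℕ) ∈ Finset.range (k+1) := Finset.mem_range.mpr (by omega)
          have := Finset.le_sup (f := fun i => ({⟨0, by omega⟩, ⟨1, by omega⟩} : Finset (Fin N)).card.choose i * (N - ({⟨0, by omega⟩, ⟨1, by omega⟩} : Finset (Fin N)).card).choose (k - i)) h1
          rw [hcard2] at this
          simpa using this
    · refine ⟨{⟨0, by omega⟩}, Finset.singleton_nonempty _, ?_, ?_⟩
      · intro h
        have hc := congrArg Finset.card h
        rw [Finset.card_singleton, Finset.card_univ, hcf] at hc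
        omega
      · have hcard1 : ({⟨0, by omega⟩} : Finset (Fin N)).card = 1 := Finset.card_singleton _
        apply le_antisymm
        · exact hub _ (Finset.singleton_nonempty _) (by
            intro h
            have hc := congrArg Finset.card h
            rw [Finset.card_singleton, Finset.card_univ, hcf] at hc
            omega)
        · rw [hFA, hM, if_neg hsp]
          have h0 : (0:ℕ) ∈ Finset.range (k+1) := Finset.mem_range.mpr (by omega)
          have := Finset.le_sup (f := fun i => ({⟨0, by omega⟩} : Finset (Fin N)).card.choose i * (N - ({⟨0, by omega⟩} : Finset (Fin N)).card).choose (k - i)) h0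
          rw [hcard1] at this
          simpa using this
  -- evaluate the supremum
  have hnty : Nonempty {A : Finset (Fin N) // A.Nonempty ∧ A ≠ Finset.univ} :=
    ⟨⟨A0, hA0ne, hA0univ⟩⟩
  have hsup : (⨆ A : {A : Finset (Fin N) // A.Nonempty ∧ A ≠ Finset.univ},
      maxEig (rdm (dicke k) A.1)) = (M : ℝ) / (N.choose k) := by
    have hbdd : BddAbove (Set.range (fun A : {A : Finset (Fin N) // A.Nonempty ∧ A ≠ Finset.univ} =>
        maxEig (rdm (dicke k) A.1))) := by
      refine ⟨(M : ℝ) / (N.choose k), ?_⟩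
      rintro r ⟨A, rfl⟩
      show maxEig (rdm (dicke k) A.1) ≤ (M : ℝ) / (N.choose k)
      rw [hval A.1]
      have h : (FA A.1 : ℝ) ≤ (M : ℝ) := by exact_mod_cast hub A.1 A.2.1 A.2.2
      exact (div_le_div_iff_of_pos_right hCpos).mpr h
    apply le_antisymm
    · apply ciSup_le
      intro A
      rw [hval A.1]
      have h : (FA A.1 : ℝ) ≤ (M : ℝ) := by exact_mod_cast hub A.1 A.2.1 A.2.2
      exact (div_le_div_iff_of_pos_right hCpos).mpr h
    · have hle := le_ciSup hbdd (⟨A0, hA0ne, hA0univ⟩ :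
        {A : Finset (Fin N) // A.Nonempty ∧ A ≠ Finset.univ})
      rw [hval A0, hA0val] at hle
      exact hle
  unfold GGM
  rw [hsup]
  -- final arithmetic
  clear_value M FA
  by_cases hsp : 2 * k = N
  · rw [hM, if_pos hsp, if_pos hsp]
    clear hval hub hA0val hsup hnty ha01 hA0ne hA0univ hFA hM
    clear A0 M FA
    have s1 : (2*k-1) * (2*k-2).choose (k-1) = (2*k-1).choose k * k := by
      have h := Nat.add_one_mul_choose_eq (2*k-2) (k-1)
      have e1 : 2*k-2+1 = 2*k-1 := by omega
      have e2 : k-1+1 = k := by omega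
      rw [e1, e2] at h
      exact h
    have s2 : (2*k) * (2*k-1).choose (k-1) = (2*k).choose k * k := by
      have h := Nat.add_one_mul_choose_eq (2*k-1) (k-1)
      have e1 : 2*k-1+1 = 2*k := by omega
      have e2 : k-1+1 = k := by omega
      rw [e1, e2] at h
      exact h
    have s3 : (2*k-1).choose (k-1) = (2*k-1).choose k := by
      rw [← Nat.choose_symm (show k ≤ 2*k-1 by omega)]
      congr 1
      omega
    have key2 : 2 * (2*k-1) * ((2*k-2).choose (k-1)) = k * ((2*k).choose k) := by
      rw [s3] at s2
      nlinarith [s1, s2]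
    have keyN : 2 * (N-1) * ((N-2).choose (k-1)) = k * (N.choose k) := by
      have e1 : 2*k-1 = N-1 := by omega
      have e2 : 2*k-2 = N-2 := by omega
      rw [e1, e2, hsp] at key2
      exact key2
    have keyR : 2 * ((N:ℝ)-1) * (((N-2).choose (k-1) : ℕ) : ℝ) = (k:ℝ) * ((N.choose k : ℕ) : ℝ) := by
      have h := congrArg (Nat.cast : ℕ → ℝ) keyN
      push_cast [Nat.cast_sub (show 1 ≤ N by omega)] at h
      linarith [h]
    have h2k : 2 * (k:ℝ) = (N:ℝ) := by exact_mod_cast hsp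
    have hden : (2:ℝ) * ((N:ℝ)-1) ≠ 0 := by
      have : (3:ℝ) ≤ (N:ℝ) := by exact_mod_cast hN
      intro h
      nlinarith
    have hCne : ((N.choose k : ℕ) : ℝ) ≠ 0 := ne_of_gt hCpos
    have hN1 : (N:ℝ) - 1 ≠ 0 := by
      intro h
      exact hden (by rw [h, mul_zero])
    field_simp
    push_cast
    nlinarith [keyR, h2k, hCpos]
  · rw [hM, if_neg hsp, if_neg hsp]
    clear hval hub hA0val hsup hnty ha01 hA0ne hA0univ hFA hM
    clear A0 M FA
    have key : (N:ℕ) * ((N-1).choose k) = (N - k) * (N.choose k) := by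
      have s1 : N * (N-1).choose k = N.choose (k+1) * (k+1) := by
        have h := Nat.add_one_mul_choose_eq (N-1) k
        have e1 : N-1+1 = N := by omega
        rw [e1] at h
        exact h
      have s2 := Nat.choose_succ_right_eq N k
      rw [s1, s2, Nat.mul_comm]
    have keyR : (N:ℝ) * (((N-1).choose k : ℕ) : ℝ) = ((N:ℝ) - k) * ((N.choose k : ℕ) : ℝ) := by
      have h := congrArg (Nat.cast : ℕ → ℝ) key
      push_cast [Nat.cast_sub hkN, Nat.cast_sub (show 1 ≤ N by omega)] at h
      linarith [h]
    have hNne : (N:ℝ) ≠ 0 := by positivity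
    have hCne : ((N.choose k : ℕ) : ℝ) ≠ 0 := ne_of_gt hCpos
    field_simp
    nlinarith [keyR, hCpos]


end QI
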